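/- Let (T,w) be a k-uniform hypertree with k ≥ 3 equipped with a weighting function w : V(T) ∪ E(T) → ℂ. Then λ ∈ ℂ is an eigenvalue of the adjacency tensor A(T,w) if and only if there exists a subtree T' of T such that λ is an eigenvalue of A(T',w) possessing an eigenvector all of whose entries are nonzero. -/

import Mathlib

/-!
Weighted uniform hypergraphs, their adjacency tensors, eigenvalues,
matchings and matching polynomials, following Wan–Wang–Hu,
"Spectra of weighted uniform hypertrees".
-/

open Finset

open scoped Classical

/-- A hypergraph on a vertex type `V`: a finite vertex set together with a
finite set of edges (each edge being a finite set of vertices). -/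
structure WHypergraph (V : Type*) where
  verts : Finset V
  edges : Finset (Finset V)

namespace WHypergraph

variable {V : Type*} [Fintype V] [DecidableEq V]

/-- `H` is a `k`-uniform hypergraph: every edge is a `k`-element subset of the
vertex set. -/
def IsUniform (H : WHypergraph V) (k : ℕ) : Prop :=
  (∀ e ∈ H.edges, e ⊆ H.verts) ∧ ∀ e ∈ H.edges, e.card = k

/-- Two vertices lie in a common edge (one step of a walk). -/
def Adj (H : WHypergraph V) (a b : V) : Prop :=
  ∃ e ∈ H.edges, a ∈ e ∧ b ∈ e

/-- Every two vertices of `H` are joined by a walk. -/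
def Connected (H : WHypergraph V) : Prop :=
  ∀ u ∈ H.verts, ∀ v ∈ H.verts, Relation.ReflTransGen H.Adj u v

/-- The data `v_0, e_1, v_1, …, e_ℓ, v_ℓ (= v_0)` (re-indexed from `0`, with
`v (i) , v (i+1 mod ℓ) ∈ e i`) form a cycle of `H`: a closed walk with no
repeated vertices and no repeated edges. -/
def IsCycleIn (H : WHypergraph V) (ℓ : ℕ) (v : ℕ → V) (e : ℕ → Finset V) : Prop :=
  2 ≤ ℓ ∧
  (∀ i < ℓ, ∀ j < ℓ, v i = v j → i = j) ∧
  (∀ i < ℓ, ∀ j < ℓ, e i = e j → i = j) ∧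
  (∀ i < ℓ, e i ∈ H.edges) ∧
  (∀ i < ℓ, v i ∈ e i ∧ v ((i + 1) % ℓ) ∈ e i)

/-- `H` contains a cycle. -/
def HasCycle (H : WHypergraph V) : Prop := ∃ ℓ v e, H.IsCycleIn ℓ v e

/-- A `k`-uniform hypertree: a connected acyclic `k`-uniform hypergraph. -/
def IsHypertree (H : WHypergraph V) (k : ℕ) : Prop :=
  H.verts.Nonempty ∧ H.IsUniform k ∧ H.Connected ∧ ¬H.HasCycle

/-- The degree of a vertex: the number of edges containing it. -/
def degree (H : WHypergraph V) (v : V) : ℕ :=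
  (H.edges.filter fun e => v ∈ e).card

/-- The subgraph induced by a vertex subset `U`. -/
def induce (H : WHypergraph V) (U : Finset V) : WHypergraph V :=
  ⟨U, H.edges.filter fun e => e ⊆ U⟩

/-- `T'` is a subtree of `T`: an induced subgraph of `T` which is itself a
`k`-uniform hypertree. -/
def IsSubtree (T T' : WHypergraph V) (k : ℕ) : Prop :=
  (∃ U : Finset V, U ⊆ T.verts ∧ T' = T.induce U) ∧ T'.IsHypertree k

/-- Delete the edge `e` from `H` together with the resulting isolated
vertices (the vertices of `e` that lie in no other edge). -/
def delEdge (H : WHypergraph V) (e : Finset V) : WHypergraph V :=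
  ⟨H.verts \ e.filter (fun v => H.degree v = 1), H.edges.erase e⟩

/-- A pendant edge of a `k`-uniform hypergraph: an edge containing exactly
`k - 1` vertices of degree one. -/
def IsPendant (H : WHypergraph V) (k : ℕ) (e : Finset V) : Prop :=
  e ∈ H.edges ∧ (e.filter fun v => H.degree v = 1).card = k - 1

/-- The entry `a_{t 0, t 1, …, t m}` of the adjacency tensor (of order `m + 1`)
of the weighted hypergraph `(H, w)`, where `wv` is the weighting on vertices and
`we` the weighting on edges: it equals `w(v)` on the diagonal entry of a vertex
`v`, `w(e)/(k-1)!` if the indices enumerate an edge `e` (here `k = m + 1`), and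
`0` otherwise. -/
noncomputable def adjEntry (H : WHypergraph V) (wv : V → ℂ) (we : Finset V → ℂ)
    {m : ℕ} (t : Fin (m + 1) → V) : ℂ :=
  if (∀ i, t i = t 0) ∧ t 0 ∈ H.verts then wv (t 0)
  else if Function.Injective t ∧ Finset.univ.image t ∈ H.edges then
    we (Finset.univ.image t) / (Nat.factorial m : ℂ)
  else 0

/-- `(lam, x)` is an eigenpair of the adjacency tensor (of order `k`) of
`(H, w)`: `x` is nonzero (as a vector indexed by the vertices) and for every
vertex `v`, `∑_{i_2,…,i_k} a_{v i_2 … i_k} x_{i_2} ⋯ x_{i_k} = lam * x_v^(k-1)`. -/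
def IsEigenpair (H : WHypergraph V) (wv : V → ℂ) (we : Finset V → ℂ) (k : ℕ)
    (lam : ℂ) (x : V → ℂ) : Prop :=
  (∃ v ∈ H.verts, x v ≠ 0) ∧
  ∀ v ∈ H.verts,
    ∑ t : Fin (k - 1) → V, H.adjEntry wv we (Fin.cons v t) * ∏ i, x (t i)
      = lam * x v ^ (k - 1)

/-- `lam` is an eigenvalue of the adjacency tensor of `(H, w)`. -/
def IsEigenvalue (H : WHypergraph V) (wv : V → ℂ) (we : Finset V → ℂ) (k : ℕ)
    (lam : ℂ) : Prop :=
  ∃ x : V → ℂ, H.IsEigenpair wv we k lam x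

/-- The spectral radius of the adjacency tensor of `(H, w)`: the largest
modulus of its eigenvalues. -/
noncomputable def spectralRadius (H : WHypergraph V) (wv : V → ℂ) (we : Finset V → ℂ)
    (k : ℕ) : ℝ :=
  sSup ((fun z : ℂ => ‖z‖) '' {lam | H.IsEigenvalue wv we k lam})

/-- The set of matchings of `H`: sets of pairwise vertex-disjoint edges
(including the empty matching). -/
noncomputable def matchings (H : WHypergraph V) : Finset (Finset (Finset V)) :=
  H.edges.powerset.filter fun M => ∀ e ∈ M, ∀ f ∈ M, e ≠ f → Disjoint e f

/-- `V(M)`: the set of vertices covered by the matching `M`. -/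
def mVerts (M : Finset (Finset V)) : Finset V := M.biUnion id

/-- The weighted matching polynomial
`μ(H,w,x) = ∑_{M ∈ M(H)} (−1)^{|M|} ∏_{e ∈ M} w(e)^k ∏_{v ∈ V(H)∖V(M)} (x − w(v))`,
evaluated at `x`. -/
noncomputable def matchPoly (H : WHypergraph V) (wv : V → ℂ) (we : Finset V → ℂ)
    (k : ℕ) (x : ℂ) : ℂ :=
  ∑ M ∈ H.matchings,
    (-1 : ℂ) ^ M.card * (∏ e ∈ M, we e ^ k) * ∏ v ∈ H.verts \ mVerts M, (x - wv v)

/-- The matching number: the maximum size of a matching of `H`. -/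
noncomputable def matchingNumber (H : WHypergraph V) : ℕ := H.matchings.sup Finset.card

/-- The polynomial `φ(H,x) = ∑_{i ≥ 0} (−1)^i p(H,i) x^{(m(H)−i)k}` where
`p(H,i)` is the number of `i`-matchings, written as a sum over all matchings,
evaluated at `x`. -/
noncomputable def phiPoly (H : WHypergraph V) (k : ℕ) (x : ℂ) : ℂ :=
  ∑ M ∈ H.matchings, (-1 : ℂ) ^ M.card * x ^ ((H.matchingNumber - M.card) * k)

/-- `B` is a weighted vertex-edge incidence matrix of `H`: rows indexed by
vertices, columns by edges, with `B(v,e) ≠ 0` iff `v ∈ e`. -/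
def IsWIM (H : WHypergraph V) (B : V → Finset V → ℂ) : Prop :=
  ∀ v ∈ H.verts, ∀ e ∈ H.edges, (B v e ≠ 0 ↔ v ∈ e)

/-- `(H, w)` is `{λ_e}`-normal with respect to the weighted incidence matrix `B`:
(C1) `∑_{e ∋ v} B(v,e) = 1` for every vertex `v`, and
(C2) `∏_{u ∈ e} B(u,e) = ∏_{u ∈ e} w(e)/(λ_e − w(u))` for every edge `e`. -/
def IsFamilyNormalWith (H : WHypergraph V) (wv : V → ℂ) (we : Finset V → ℂ)
    (lam : Finset V → ℂ) (B : V → Finset V → ℂ) : Prop :=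
  H.IsWIM B ∧
  (∀ v ∈ H.verts, ∑ e ∈ H.edges.filter (fun e => v ∈ e), B v e = 1) ∧
  (∀ e ∈ H.edges, ∏ u ∈ e, B u e = ∏ u ∈ e, we e / (lam e - wv u))

/-- `(H, w)` is `{λ_e}`-normal (with respect to some weighted incidence matrix). -/
def IsFamilyNormal (H : WHypergraph V) (wv : V → ℂ) (we : Finset V → ℂ)
    (lam : Finset V → ℂ) : Prop :=
  ∃ B : V → Finset V → ℂ, H.IsFamilyNormalWith wv we lam B

/-- `(H, w)` is consistently `λ`-normal: it is `λ`-normal with respect to some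
weighted incidence matrix `B` which moreover satisfies (C3): for every cycle
`v_0, e_1, v_1, …, e_ℓ, v_ℓ (= v_0)`,
`∏_{i=1}^{ℓ} [B(v_i,e_i)(λ − w(v_i))]/[B(v_{i−1},e_i)(λ − w(v_{i−1}))] = 1`. -/
def IsConsistentlyNormal (H : WHypergraph V) (wv : V → ℂ) (we : Finset V → ℂ)
    (lam : ℂ) : Prop :=
  ∃ B : V → Finset V → ℂ, H.IsFamilyNormalWith wv we (fun _ => lam) B ∧
    ∀ ℓ v e, H.IsCycleIn ℓ v e →
      ∏ i ∈ Finset.range ℓ,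
        (B (v ((i + 1) % ℓ)) (e i) * (lam - wv (v ((i + 1) % ℓ)))) /
          (B (v i) (e i) * (lam - wv (v i))) = 1

/-- An arc of the digraph `D(A)` associated with the adjacency tensor (of order
`k`) of `(H,w)`: there is a nonzero entry `a_{p i_2 … i_k}` with some `i_j = q`. -/
def TensorArc (H : WHypergraph V) (wv : V → ℂ) (we : Finset V → ℂ) (k : ℕ)
    (p q : V) : Prop :=
  ∃ t : Fin (k - 1) → V, H.adjEntry wv we (Fin.cons p t) ≠ 0 ∧ ∃ j, t j = q

/-- The adjacency tensor of `(H,w)` is weakly irreducible: the associated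
digraph `D(A)` is strongly connected on the vertex set of `H`. -/
def WeaklyIrreducible (H : WHypergraph V) (wv : V → ℂ) (we : Finset V → ℂ)
    (k : ℕ) : Prop :=
  ∀ a ∈ H.verts, ∀ b ∈ H.verts, Relation.ReflTransGen (H.TensorArc wv we k) a b

set_option linter.unusedSectionVars false

lemma induce_verts (H : WHypergraph V) (U : Finset V) : (H.induce U).verts = U := rfl

lemma mem_induce_edges {H : WHypergraph V} {U e : Finset V} :
    e ∈ (H.induce U).edges ↔ e ∈ H.edges ∧ e ⊆ U := Finset.mem_filter

/-- A walk of length `n` from `a` to `b` with explicit vertices and edges. -/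
def IsChain (H : WHypergraph V) (n : ℕ) (v : ℕ → V) (f : ℕ → Finset V) (a b : V) : Prop :=
  v 0 = a ∧ v n = b ∧ ∀ m < n, f m ∈ H.edges ∧ v m ∈ f m ∧ v (m + 1) ∈ f m

lemma chain_of_rtg {H : WHypergraph V} {a b : V} (h : Relation.ReflTransGen H.Adj a b) :
    ∃ n v f, H.IsChain n v f a b := by
  induction h with
  | refl => exact ⟨0, fun _ => a, fun _ => ∅, rfl, rfl, fun m hm => absurd hm (Nat.not_lt_zero m)⟩
  | @tail c d hac hadj ih =>
    obtain ⟨n, v, f, hv0, hvn, hstep⟩ := ih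
    obtain ⟨g, hg, hcg, hdg⟩ := hadj
    refine ⟨n + 1, fun m => if m ≤ n then v m else d, fun m => if m < n then f m else g,
      by simp [hv0], by simp, ?_⟩
    intro m hm
    dsimp only
    rcases Nat.lt_or_ge m n with hmn | hmn
    · rw [if_pos hmn.le, if_pos (by omega : m + 1 ≤ n), if_pos hmn]
      exact hstep m hmn
    · have hmn' : m = n := by omega
      subst hmn'
      rw [if_pos (le_refl m), if_neg (lt_irrefl m), if_neg (by omega : ¬ m + 1 ≤ m)]
      exact ⟨hg, hvn ▸ hcg, hdg⟩

lemma chain_splice {H : WHypergraph V} {n : ℕ} {v : ℕ → V} {f : ℕ → Finset V} {a b : V}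
    (h : H.IsChain n v f a b) {i j : ℕ} (hij : i < j) (hjn : j ≤ n)
    (hstep : j < n → v i ∈ f j) (hend : j = n → v i = b) :
    ∃ v' f', H.IsChain (i + (n - j)) v' f' a b := by
  obtain ⟨hv0, hvn, hch⟩ := h
  set c := j - i with hc
  have hic : i + c = j := by omega
  refine ⟨fun m => if m ≤ i then v m else v (m + c), fun m => if m < i then f m else f (m + c),
    by simp [hv0], ?_, ?_⟩
  · dsimp only
    by_cases hL : i + (n - j) ≤ i
    · have hjn' : j = n := by omega
      rw [if_pos hL, (by omega : i + (n - j) = i)]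
      exact hend hjn'
    · rw [if_neg hL, (by omega : i + (n - j) + c = n)]
      exact hvn
  · intro m hm
    dsimp only
    rcases Nat.lt_or_ge m i with hmi | hmi
    · rw [if_pos hmi, if_pos hmi.le, if_pos (by omega : m + 1 ≤ i)]
      exact hch m (by omega)
    · have hmc : m + c < n := by omega
      have h3 := hch (m + c) hmc
      rw [if_neg (by omega : ¬ m < i), if_neg (by omega : ¬ m + 1 ≤ i)]
      rcases Nat.eq_or_lt_of_le hmi with hmi' | hmi'
      · have hjn' : j < n := by omega
        rw [if_pos (by omega : m ≤ i), (by omega : m + c = j), (by omega : m + 1 + c = j + 1),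
          ← hmi']
        exact ⟨(hch j hjn').1, hstep hjn', (hch j hjn').2.2⟩
      · rw [if_neg (by omega : ¬ m ≤ i), (by omega : m + 1 + c = m + c + 1)]
        exact h3

lemma no_cross_edge {T : WHypergraph V} (hnc : ¬T.HasCycle) {U : Finset V} {e : Finset V}
    (he : e ∈ T.edges) (hsub : ¬ e ⊆ U) {a b : V} (ha : a ∈ e) (hb : b ∈ e) (hab : a ≠ b)
    (hpath : Relation.ReflTransGen (T.induce U).Adj a b) : False := by
  classical
  have hPex : ∃ n, ∃ v f, (T.induce U).IsChain n v f a b := chain_of_rtg hpath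
  set n := Nat.find hPex with hn
  obtain ⟨v, f, hch⟩ : ∃ v f, (T.induce U).IsChain n v f a b := Nat.find_spec hPex
  have hmin : ∀ m < n, ¬ ∃ v f, (T.induce U).IsChain m v f a b := fun m hm => Nat.find_min hPex hm
  have hn0 : n ≠ 0 := by
    intro h0
    apply hab
    rw [← hch.1, ← hch.2.1, h0]
  have vinj : ∀ i j, i < j → j ≤ n → v i ≠ v j := by
    intro i j hij hjn hvij
    refine hmin (i + (n - j)) (by omega) (chain_splice hch hij hjn ?_ ?_)
    · intro hjn'; rw [hvij]; exact (hch.2.2 j hjn').2.1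
    · intro hjn'; rw [hvij, hjn']; exact hch.2.1
  have finj : ∀ i j, i < j → j < n → f i ≠ f j := by
    intro i j hij hjn hfij
    refine hmin (i + (n - j)) (by omega) (chain_splice hch hij hjn.le ?_ ?_)
    · intro _; rw [← hfij]; exact (hch.2.2 i (by omega)).2.1
    · intro h; omega
  refine hnc ⟨n + 1, v, fun i => if i < n then f i else e, (by omega), ?_, ?_, ?_, ?_⟩
  · intro i hi j hj hvij
    rcases lt_trichotomy i j with h | h | h
    · exact absurd hvij (vinj i j h (by omega))
    · exact h
    · exact absurd hvij.symm (vinj j i h (by omega))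
  · intro i hi j hj hfij
    dsimp only at hfij
    have hfU : ∀ m < n, f m ⊆ U := fun m hm => (mem_induce_edges.1 (hch.2.2 m hm).1).2
    rcases Nat.lt_or_ge i n with hi' | hi' <;> rcases Nat.lt_or_ge j n with hj' | hj'
    · rw [if_pos hi', if_pos hj'] at hfij
      rcases lt_trichotomy i j with h | h | h
      · exact absurd hfij (finj i j h hj')
      · exact h
      · exact absurd hfij.symm (finj j i h hi')
    · rw [if_pos hi', if_neg (by omega : ¬ j < n)] at hfij
      exact absurd (hfij ▸ hfU i hi') hsub
    · rw [if_neg (by omega : ¬ i < n), if_pos hj'] at hfij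
      exact absurd (hfij ▸ hfU j hj') hsub
    · omega
  · intro i hi
    dsimp only
    rcases Nat.lt_or_ge i n with hi' | hi'
    · rw [if_pos hi']
      exact (mem_induce_edges.1 (hch.2.2 i hi').1).1
    · rw [if_neg (by omega : ¬ i < n)]; exact he
  · intro i hi
    dsimp only
    rcases Nat.lt_or_ge i n with hi' | hi'
    · rw [if_pos hi', Nat.mod_eq_of_lt (by omega : i + 1 < n + 1)]
      exact ⟨(hch.2.2 i hi').2.1, (hch.2.2 i hi').2.2⟩
    · rw [show i = n from by omega, if_neg (lt_irrefl n), Nat.mod_self]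
      refine ⟨?_, ?_⟩
      · rw [hch.2.1]; exact hb
      · rw [hch.1]; exact ha

lemma sum_eq_of_eqOn (H : WHypergraph V) (hHe : ∀ e ∈ H.edges, e ⊆ H.verts)
    (wv : V → ℂ) (we : Finset V → ℂ) (k : ℕ) (x y : V → ℂ)
    (hxy : ∀ u ∈ H.verts, x u = y u) (v : V) (hv : v ∈ H.verts) :
    ∑ t : Fin (k - 1) → V, H.adjEntry wv we (Fin.cons v t) * ∏ i, x (t i)
      = ∑ t : Fin (k - 1) → V, H.adjEntry wv we (Fin.cons v t) * ∏ i, y (t i) := by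
  refine Finset.sum_congr rfl fun t _ => ?_
  by_cases hall : (∀ i, (Fin.cons v t : Fin (k - 1 + 1) → V) i = (Fin.cons v t : Fin (k - 1 + 1) → V) 0) ∧ (Fin.cons v t : Fin (k - 1 + 1) → V) 0 ∈ H.verts
  · have hprod : ∏ i, x (t i) = ∏ i, y (t i) := by
      refine Finset.prod_congr rfl fun i _ => ?_
      have hti : t i = v := by
        have h := hall.1 i.succ
        rwa [Fin.cons_succ, Fin.cons_zero] at h
      rw [hti]
      exact hxy v hv
    rw [hprod]
  · by_cases hinj : Function.Injective (Fin.cons v t) ∧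
        Finset.univ.image (Fin.cons v t) ∈ H.edges
    · have hprod : ∏ i, x (t i) = ∏ i, y (t i) := by
        refine Finset.prod_congr rfl fun i _ => ?_
        refine hxy _ (hHe _ hinj.2 (Finset.mem_image.2 ⟨i.succ, Finset.mem_univ _, ?_⟩))
        rfl
      rw [hprod]
    · unfold adjEntry
      rw [if_neg hall, if_neg hinj]
      ring

lemma sum_induce_eq (T : WHypergraph V) (U : Finset V) (hU : U ⊆ T.verts)
    (wv : V → ℂ) (we : Finset V → ℂ) (k : ℕ) (x : V → ℂ) (v : V) (hv : v ∈ U)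
    (hzero : ∀ e ∈ T.edges, v ∈ e → ¬ e ⊆ U → ∃ u ∈ e, u ≠ v ∧ x u = 0) :
    ∑ t : Fin (k - 1) → V, (T.induce U).adjEntry wv we (Fin.cons v t) * ∏ i, x (t i)
      = ∑ t : Fin (k - 1) → V, T.adjEntry wv we (Fin.cons v t) * ∏ i, x (t i) := by
  refine Finset.sum_congr rfl fun t _ => ?_
  unfold adjEntry
  have h0 : (Fin.cons v t : Fin (k - 1 + 1) → V) 0 = v := rfl
  by_cases hall : ∀ i, (Fin.cons v t : Fin (k - 1 + 1) → V) i = (Fin.cons v t : Fin (k - 1 + 1) → V) 0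
  · have c1 : (∀ i, (Fin.cons v t : Fin (k - 1 + 1) → V) i = (Fin.cons v t : Fin (k - 1 + 1) → V) 0) ∧ (Fin.cons v t : Fin (k - 1 + 1) → V) 0 ∈ (T.induce U).verts :=
      ⟨hall, by rw [h0]; exact hv⟩
    have c2 : (∀ i, (Fin.cons v t : Fin (k - 1 + 1) → V) i = (Fin.cons v t : Fin (k - 1 + 1) → V) 0) ∧ (Fin.cons v t : Fin (k - 1 + 1) → V) 0 ∈ T.verts :=
      ⟨hall, by rw [h0]; exact hU hv⟩
    rw [if_pos c1, if_pos c2]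
  · have c1 : ¬((∀ i, (Fin.cons v t : Fin (k - 1 + 1) → V) i = (Fin.cons v t : Fin (k - 1 + 1) → V) 0) ∧ (Fin.cons v t : Fin (k - 1 + 1) → V) 0 ∈ (T.induce U).verts) :=
      fun h => hall h.1
    have c2 : ¬((∀ i, (Fin.cons v t : Fin (k - 1 + 1) → V) i = (Fin.cons v t : Fin (k - 1 + 1) → V) 0) ∧ (Fin.cons v t : Fin (k - 1 + 1) → V) 0 ∈ T.verts) :=
      fun h => hall h.1
    rw [if_neg c1, if_neg c2]
    by_cases hinj : Function.Injective (Fin.cons v t : Fin (k - 1 + 1) → V)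
    · by_cases he : Finset.univ.image (Fin.cons v t : Fin (k - 1 + 1) → V) ∈ T.edges
      · by_cases hsub : Finset.univ.image (Fin.cons v t : Fin (k - 1 + 1) → V) ⊆ U
        · have d1 : Function.Injective (Fin.cons v t : Fin (k - 1 + 1) → V) ∧
              Finset.univ.image (Fin.cons v t : Fin (k - 1 + 1) → V) ∈ (T.induce U).edges :=
            ⟨hinj, mem_induce_edges.2 ⟨he, hsub⟩⟩
          rw [if_pos d1, if_pos ⟨hinj, he⟩]
        · have d1 : ¬(Function.Injective (Fin.cons v t : Fin (k - 1 + 1) → V) ∧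
              Finset.univ.image (Fin.cons v t : Fin (k - 1 + 1) → V) ∈ (T.induce U).edges) :=
            fun h => hsub (mem_induce_edges.1 h.2).2
          rw [if_neg d1]
          obtain ⟨u, hu, huv, hxu⟩ := hzero _ he
            (Finset.mem_image.2 ⟨0, Finset.mem_univ _, h0⟩) hsub
          obtain ⟨i, -, hi⟩ := Finset.mem_image.1 hu
          rcases Fin.eq_zero_or_eq_succ i with hi0 | ⟨j, hj⟩
          · rw [hi0, h0] at hi
            exact absurd hi.symm huv
          · have hji : t j = u := by rw [hj] at hi; rw [← hi]; rfl
            rw [Finset.prod_eq_zero (Finset.mem_univ j) (by rw [hji]; exact hxu)]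
            ring
      · have d1 : ¬(Function.Injective (Fin.cons v t : Fin (k - 1 + 1) → V) ∧
            Finset.univ.image (Fin.cons v t : Fin (k - 1 + 1) → V) ∈ (T.induce U).edges) :=
          fun h => he (mem_induce_edges.1 h.2).1
        have d2 : ¬(Function.Injective (Fin.cons v t : Fin (k - 1 + 1) → V) ∧
            Finset.univ.image (Fin.cons v t : Fin (k - 1 + 1) → V) ∈ T.edges) :=
          fun h => he h.2
        rw [if_neg d1, if_neg d2]
    · have d1 : ¬(Function.Injective (Fin.cons v t : Fin (k - 1 + 1) → V) ∧
          Finset.univ.image (Fin.cons v t : Fin (k - 1 + 1) → V) ∈ (T.induce U).edges) :=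
        fun h => hinj h.1
      have d2 : ¬(Function.Injective (Fin.cons v t : Fin (k - 1 + 1) → V) ∧
          Finset.univ.image (Fin.cons v t : Fin (k - 1 + 1) → V) ∈ T.edges) :=
        fun h => hinj h.1
      rw [if_neg d1, if_neg d2]

lemma hasCycle_induce {T : WHypergraph V} {U : Finset V} (h : (T.induce U).HasCycle) :
    T.HasCycle := by
  obtain ⟨l, v, e, h1, h2, h3, h4, h5⟩ := h
  exact ⟨l, v, e, h1, h2, h3, fun i hi => (mem_induce_edges.1 (h4 i hi)).1, h5⟩

lemma sum_eq_zero_outside (T : WHypergraph V) (hnc : ¬T.HasCycle) {k : ℕ}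
    (hunif : T.IsUniform k) (hk : 3 ≤ k) (U : Finset V) (hconn : (T.induce U).Connected)
    (wv : V → ℂ) (we : Finset V → ℂ) (y : V → ℂ) (hy : ∀ u, u ∉ U → y u = 0)
    (v : V) (hvU : v ∉ U) :
    ∑ t : Fin (k - 1) → V, T.adjEntry wv we (Fin.cons v t) * ∏ i, y (t i) = 0 := by
  refine Finset.sum_eq_zero fun t _ => ?_
  unfold adjEntry
  have h0 : (Fin.cons v t : Fin (k - 1 + 1) → V) 0 = v := rfl
  have i0 : Fin (k - 1) := ⟨0, by omega⟩
  by_cases hall : ∀ i, (Fin.cons v t : Fin (k - 1 + 1) → V) i = (Fin.cons v t : Fin (k - 1 + 1) → V) 0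
  · have hti0 : y (t i0) = 0 := by
      have h := hall i0.succ
      rw [h0] at h
      have h' : t i0 = v := h
      rw [h']
      exact hy v hvU
    rw [Finset.prod_eq_zero (Finset.mem_univ i0) hti0]
    ring
  · have c2 : ¬((∀ i, (Fin.cons v t : Fin (k - 1 + 1) → V) i = (Fin.cons v t : Fin (k - 1 + 1) → V) 0) ∧ (Fin.cons v t : Fin (k - 1 + 1) → V) 0 ∈ T.verts) :=
      fun h => hall h.1
    rw [if_neg c2]
    by_cases hie : Function.Injective (Fin.cons v t : Fin (k - 1 + 1) → V) ∧
        Finset.univ.image (Fin.cons v t : Fin (k - 1 + 1) → V) ∈ T.edges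
    · set e := Finset.univ.image (Fin.cons v t : Fin (k - 1 + 1) → V) with hedef
      have hve : v ∈ e := Finset.mem_image.2 ⟨0, Finset.mem_univ _, h0⟩
      have hesub : ¬ e ⊆ U := fun h => hvU (h hve)
      by_cases hout : ∃ u ∈ e, u ∉ U ∧ u ≠ v
      · obtain ⟨u, hu, huU, huv⟩ := hout
        obtain ⟨i, -, hi⟩ := Finset.mem_image.1 hu
        rcases Fin.eq_zero_or_eq_succ i with hi0 | ⟨j, hj⟩
        · rw [hi0, h0] at hi
          exact absurd hi.symm huv
        · have hji : t j = u := by rw [hj] at hi; rw [← hi]; rfl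
          rw [Finset.prod_eq_zero (Finset.mem_univ j) (by rw [hji]; exact hy u huU)]
          ring
      · exfalso
        push_neg at hout
        have hcard : 1 < (e.erase v).card := by
          rw [Finset.card_erase_of_mem hve, hunif.2 e hie.2]
          omega
        obtain ⟨a, ha, b, hb, hab⟩ := Finset.one_lt_card.1 hcard
        have haU : a ∈ U := by
          by_contra haU
          exact (Finset.mem_erase.1 ha).1 (hout a (Finset.mem_of_mem_erase ha) haU)
        have hbU : b ∈ U := by
          by_contra hbU
          exact (Finset.mem_erase.1 hb).1 (hout b (Finset.mem_of_mem_erase hb) hbU)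
        exact no_cross_edge hnc hie.2 hesub (Finset.mem_of_mem_erase ha)
          (Finset.mem_of_mem_erase hb) hab (hconn a haU b hbU)
    · rw [if_neg hie]
      ring

end WHypergraph


/-- For a weighted `k`-uniform hypertree `(T,w)` with `k ≥ 3`,
`lam` is an eigenvalue of `A(T,w)` iff there is a subtree `T'` of `T` such that
`lam` is an eigenvalue of `A(T',w)` possessing an eigenvector all of whose
entries are nonzero. -/
theorem eigenvalue_iff_subtree_eigenvector_full_support
    {V : Type*} [Fintype V] [DecidableEq V]
    (T : WHypergraph V) (k : ℕ) (hk : 3 ≤ k) (hT : T.IsHypertree k)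
    (wv : V → ℂ) (we : Finset V → ℂ) (lam : ℂ) :
    T.IsEigenvalue wv we k lam ↔
      ∃ T' : WHypergraph V, T.IsSubtree T' k ∧
        ∃ x : V → ℂ, T'.IsEigenpair wv we k lam x ∧ ∀ v ∈ T'.verts, x v ≠ 0 := by
  constructor
  · rintro ⟨x, ⟨v0, hv0T, hx0⟩, heig⟩
    classical
    set S : Finset V := T.verts.filter (fun u => x u ≠ 0) with hS
    set U : Finset V := S.filter (fun u => Relation.ReflTransGen (T.induce S).Adj v0 u) with hUdef
    have hUS : U ⊆ S := Finset.filter_subset _ _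
    have hST : S ⊆ T.verts := Finset.filter_subset _ _
    have hUT : U ⊆ T.verts := hUS.trans hST
    have hv0S : v0 ∈ S := Finset.mem_filter.2 ⟨hv0T, hx0⟩
    have hv0U : v0 ∈ U := Finset.mem_filter.2 ⟨hv0S, Relation.ReflTransGen.refl⟩
    have hclose : ∀ e ∈ T.edges, e ⊆ S → ∀ w ∈ e, w ∈ U → e ⊆ U := by
      intro e he hes w hwe hwU z hz
      refine Finset.mem_filter.2 ⟨hes hz, Relation.ReflTransGen.trans
        (Finset.mem_filter.1 hwU).2
        (Relation.ReflTransGen.single ⟨e, WHypergraph.mem_induce_edges.2 ⟨he, hes⟩, hwe, hz⟩)⟩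
    have hsymm : Symmetric (T.induce S).Adj := by
      rintro u w ⟨e, he, h1, h2⟩
      exact ⟨e, he, h2, h1⟩
    have hlift : ∀ u w, Relation.ReflTransGen (T.induce S).Adj u w → u ∈ U →
        w ∈ U ∧ Relation.ReflTransGen (T.induce U).Adj u w := by
      intro u w h
      induction h with
      | refl => exact fun hu => ⟨hu, Relation.ReflTransGen.refl⟩
      | @tail c d huc hadj ih =>
        intro hu
        obtain ⟨hcU, hpath⟩ := ih hu
        obtain ⟨e, he, hce, hde⟩ := hadj
        have heS := WHypergraph.mem_induce_edges.1 he
        have heU : e ⊆ U := hclose e heS.1 heS.2 c hce hcU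
        exact ⟨heU hde, hpath.tail ⟨e, WHypergraph.mem_induce_edges.2 ⟨heS.1, heU⟩, hce, hde⟩⟩
    have hconn : (T.induce U).Connected := by
      intro u hu w hw
      have hu' : u ∈ U := hu
      have hw' : w ∈ U := hw
      have h3 : Relation.ReflTransGen (T.induce S).Adj u w :=
        Relation.ReflTransGen.trans
          ((@Relation.ReflTransGen.stdSymm _ _ ⟨fun a b h => hsymm h⟩).symm _ _ (Finset.mem_filter.1 hu').2)
          (Finset.mem_filter.1 hw').2
      exact (hlift u w h3 hu').2
    have hzero : ∀ e ∈ T.edges, ∀ v ∈ U, v ∈ e → ¬ e ⊆ U → ∃ u ∈ e, u ≠ v ∧ x u = 0 := by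
      intro e he v hvU hve hsub
      by_cases hes : e ⊆ S
      · exact absurd (hclose e he hes v hve hvU) hsub
      · obtain ⟨u, hu, huS⟩ := Finset.not_subset.1 hes
        refine ⟨u, hu, fun h => huS (h ▸ hUS hvU), ?_⟩
        by_contra hxu
        exact huS (Finset.mem_filter.2 ⟨hT.2.1.1 e he hu, hxu⟩)
    refine ⟨T.induce U, ⟨⟨U, hUT, rfl⟩, ⟨v0, hv0U⟩,
      ⟨fun e he => (WHypergraph.mem_induce_edges.1 he).2,
        fun e he => hT.2.1.2 e (WHypergraph.mem_induce_edges.1 he).1⟩,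
      hconn, fun h => hT.2.2.2 (WHypergraph.hasCycle_induce h)⟩,
      x, ⟨⟨v0, hv0U, hx0⟩, ?_⟩, fun v hv => (Finset.mem_filter.1 (hUS hv)).2⟩
    intro v hv
    have hv' : v ∈ U := hv
    rw [WHypergraph.sum_induce_eq T U hUT wv we k x v hv'
      (fun e he hve hsub => hzero e he v hv' hve hsub)]
    exact heig v (hUT hv')
  · rintro ⟨T', ⟨⟨U, hUT, rfl⟩, htree⟩, x, ⟨⟨v0, hv0, hx0⟩, heig⟩, hfull⟩
    classical
    set y : V → ℂ := fun u => if u ∈ U then x u else 0 with hy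
    have hyU : ∀ u, u ∉ U → y u = 0 := fun u hu => if_neg hu
    have hyx : ∀ u ∈ U, y u = x u := fun u hu => if_pos hu
    have hv0U : v0 ∈ U := hv0
    refine ⟨y, ⟨v0, hUT hv0U, by rw [hyx v0 hv0U]; exact hx0⟩, ?_⟩
    intro v hv
    by_cases hvU : v ∈ U
    · have hz : ∀ e ∈ T.edges, v ∈ e → ¬ e ⊆ U → ∃ u ∈ e, u ≠ v ∧ y u = 0 := by
        intro e he hve hsub
        obtain ⟨u, hu, huU⟩ := Finset.not_subset.1 hsub
        exact ⟨u, hu, fun h => huU (h ▸ hvU), hyU u huU⟩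
      have h1 := WHypergraph.sum_induce_eq T U hUT wv we k y v hvU hz
      rw [← h1]
      have h2 := WHypergraph.sum_eq_of_eqOn (T.induce U)
        (fun e he => (WHypergraph.mem_induce_edges.1 he).2) wv we k y x hyx v hvU
      rw [h2, hyx v hvU]
      exact heig v hvU
    · rw [WHypergraph.sum_eq_zero_outside T hT.2.2.2 hT.2.1 hk U htree.2.2.1 wv we y hyU v hvU,
        hyU v hvU, zero_pow (by omega : k - 1 ≠ 0), mul_zero]
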